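/- For every n ≥ 1, the discriminant of the matrix ring Mₙ(ℤ), a ring of rank n², equals (−1)^{n(n−1)/2} · n^{n²}. -/

import Mathlib

open Matrix

/-- The Gram matrix of a ring of rank `m` with respect to a ℤ-basis `b`:
its `(i,j)` entry is the trace of the matrix of left multiplication by `b i * b j`. -/
noncomputable def gramMatrix {m : ℕ} {A : Type} [Ring A] (b : Module.Basis (Fin m) ℤ A) :
    Matrix (Fin m) (Fin m) ℤ :=
  Matrix.of fun i j => (Algebra.leftMulMatrix b (b i * b j)).trace

/-- The discriminant of a ring of rank `m` with respect to a ℤ-basis `b`. -/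
noncomputable def disc {m : ℕ} {A : Type} [Ring A] (b : Module.Basis (Fin m) ℤ A) : ℤ :=
  (gramMatrix b).det

section Aux

open LinearMap

/-- The trace form `(x, y) ↦ Tr(L_{xy})` as a bilinear form. -/
noncomputable def gramForm (A : Type) [Ring A] : LinearMap.BilinForm ℤ A :=
  (LinearMap.mul ℤ A).compr₂ ((LinearMap.trace ℤ A).comp (Algebra.lmul ℤ A).toLinearMap)

theorem gramForm_apply {A : Type} [Ring A] (x y : A) :
    gramForm A x y = LinearMap.trace ℤ A (Algebra.lmul ℤ A (x * y)) := rfl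

theorem gramMatrix_eq {m : ℕ} {A : Type} [Ring A] (b : Module.Basis (Fin m) ℤ A) :
    gramMatrix b = LinearMap.BilinForm.toMatrix b (gramForm A) := by
  ext i j
  rw [BilinForm.toMatrix_apply, gramForm_apply,
    LinearMap.trace_eq_matrix_trace ℤ b]
  rfl

/-- The discriminant does not depend on the choice of ℤ-basis. -/
theorem disc_eq_disc {m : ℕ} {A : Type} [Ring A] (b c : Module.Basis (Fin m) ℤ A) :
    disc b = disc c := by
  have h := BilinForm.toMatrix_mul_basis_toMatrix b c (gramForm A)
  have hu : (b.toMatrix c).det * (c.toMatrix b).det = 1 := by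
    rw [← det_mul, Module.Basis.toMatrix_mul_toMatrix_flip, det_one]
  have hsq : (b.toMatrix c).det * (b.toMatrix c).det = 1 := by
    rcases Int.isUnit_iff.mp (IsUnit.of_mul_eq_one _ hu) with h1 | h1 <;> rw [h1] <;> norm_num
  unfold disc
  rw [gramMatrix_eq b, gramMatrix_eq c, ← h, det_mul, det_mul, det_transpose]
  ring_nf
  rw [sq, hsq, one_mul]

/-- The sign of an involution is `-1` to the half of the cardinality of its support. -/
theorem sign_of_sq_one {α : Type*} [Fintype α] [DecidableEq α] {σ : Equiv.Perm α}
    (h : σ ^ 2 = 1) : Equiv.Perm.sign σ = (-1) ^ (σ.support.card / 2) := by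
  have hc : ∀ m ∈ σ.cycleType, m = 2 := fun m hm =>
    le_antisymm (Nat.le_of_dvd two_pos
      ((Equiv.Perm.dvd_of_mem_cycleType hm).trans (orderOf_dvd_of_pow_eq_one h)))
      (Equiv.Perm.two_le_of_mem_cycleType hm)
  have hrep : σ.cycleType = Multiset.replicate (Multiset.card σ.cycleType) 2 :=
    Multiset.eq_replicate_card.mpr hc
  have hsum : σ.support.card = 2 * Multiset.card σ.cycleType := by
    conv_lhs => rw [← Equiv.Perm.sum_cycleType, hrep]
    rw [Multiset.sum_replicate, smul_eq_mul, mul_comm]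
  rw [Equiv.Perm.sign_of_cycleType, Equiv.Perm.sum_cycleType, hsum,
    Nat.mul_div_cancel_left _ two_pos]
  set k := Multiset.card σ.cycleType
  rw [pow_add, pow_mul]
  norm_num

/-- The cardinality of the support of the swap permutation of `Fin n × Fin n`. -/
theorem support_card_prodComm (n : ℕ) :
    (Equiv.Perm.support (Equiv.prodComm (Fin n) (Fin n) : Equiv.Perm (Fin n × Fin n))).card
      = n * n - n := by
  classical
  have h1 : Equiv.Perm.support (Equiv.prodComm (Fin n) (Fin n) : Equiv.Perm (Fin n × Fin n))
      = Finset.univ.filter (fun p : Fin n × Fin n => p.1 ≠ p.2) := by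
    ext p
    rw [Equiv.Perm.mem_support, Finset.mem_filter]
    simp only [Finset.mem_univ, true_and]
    show ¬(p.2, p.1) = p ↔ _
    rw [Prod.ext_iff]
    constructor
    · intro hp h; exact hp ⟨h.symm, h⟩
    · rintro hp ⟨h1, h2⟩; exact hp h2
  have h2 : (Finset.univ.filter (fun p : Fin n × Fin n => p.1 = p.2)).card = n := by
    rw [show (Finset.univ.filter (fun p : Fin n × Fin n => p.1 = p.2))
        = Finset.univ.image (fun a : Fin n => (a, a)) by
      ext p
      simp only [Finset.mem_filter, Finset.mem_univ, true_and, Finset.mem_image, Prod.ext_iff]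
      constructor
      · intro hp; exact ⟨p.1, rfl, hp⟩
      · rintro ⟨a, h1, h2⟩; rw [← h1, ← h2]]
    rw [Finset.card_image_of_injective _ (fun a b hab => (Prod.ext_iff.mp hab).1), Finset.card_univ,
      Fintype.card_fin]
  have h3 := Finset.card_filter_add_card_filter_not
    (s := (Finset.univ : Finset (Fin n × Fin n))) (p := fun p => p.1 = p.2)
  simp only [Finset.card_univ, Fintype.card_prod, Fintype.card_fin] at h3
  have h3' : (Finset.univ.filter (fun p : Fin n × Fin n => p.1 = p.2)).card
      + (Finset.univ.filter (fun p : Fin n × Fin n => p.1 ≠ p.2)).card = n * n := h3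
  rw [h1]
  omega

/-- The standard basis of the matrix ring, indexed by pairs. -/
noncomputable def matB (n : ℕ) : Module.Basis (Fin n × Fin n) ℤ (Matrix (Fin n) (Fin n) ℤ) :=
  Module.Basis.ofEquivFun
    ((Matrix.ofLinearEquiv ℤ).symm.trans (LinearEquiv.curry ℤ ℤ (Fin n) (Fin n)).symm)

theorem matB_repr (n : ℕ) (M : Matrix (Fin n) (Fin n) ℤ) (p : Fin n × Fin n) :
    (matB n).repr M p = M p.1 p.2 := rfl

theorem matB_apply (n : ℕ) (p : Fin n × Fin n) : matB n p = Matrix.single p.1 p.2 1 := by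
  apply (matB n).repr.injective
  ext q
  rw [Module.Basis.repr_self, matB_repr]
  simp [Matrix.single, Finsupp.single_apply, Prod.ext_iff, and_comm]

/-- The trace of left multiplication by `x` in the matrix ring is `n * Tr x`. -/
theorem trace_lmul (n : ℕ) (x : Matrix (Fin n) (Fin n) ℤ) :
    LinearMap.trace ℤ _ (Algebra.lmul ℤ (Matrix (Fin n) (Fin n) ℤ) x) = n * x.trace := by
  rw [LinearMap.trace_eq_matrix_trace ℤ (matB n)]
  have hd : ∀ p : Fin n × Fin n,
      (LinearMap.toMatrix (matB n) (matB n) ((Algebra.lmul ℤ _) x)) p p = x p.1 p.1 := by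
    intro p
    rw [← Algebra.leftMulMatrix_apply, Algebra.leftMulMatrix_eq_repr_mul, matB_repr,
      matB_apply]
    rw [Matrix.mul_single_apply_same, mul_one]
  rw [Matrix.trace]
  simp only [Matrix.diag_apply]
  rw [Finset.sum_congr rfl (fun p _ => hd p), Fintype.sum_prod_type]
  simp only [Finset.sum_const, Finset.card_univ, Fintype.card_fin, nsmul_eq_mul,
    Matrix.trace, Matrix.diag_apply, Finset.mul_sum]

theorem trace_stdBasisMatrix' (n : ℕ) (a d : Fin n) :
    (Matrix.single a d (1:ℤ)).trace = if a = d then 1 else 0 := by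
  simp only [Matrix.trace, Matrix.diag_apply, Matrix.single, Matrix.of_apply]
  by_cases h : a = d
  · subst h; simp
  · simp [h, fun i => (show ¬(a = i ∧ d = i) from fun ⟨h1, h2⟩ => h (h1.trans h2.symm))]

/-- The Gram matrix of the standard basis is `n` times the swap permutation matrix. -/
theorem gram_matB (n : ℕ) :
    LinearMap.BilinForm.toMatrix (matB n) (gramForm (Matrix (Fin n) (Fin n) ℤ))
      = (n : ℤ) • (Equiv.Perm.permMatrix ℤ (Equiv.prodComm (Fin n) (Fin n) : Equiv.Perm (Fin n × Fin n))) := by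
  ext p q
  obtain ⟨a, b⟩ := p
  obtain ⟨c, d⟩ := q
  rw [BilinForm.toMatrix_apply, gramForm_apply]
  simp only [matB_apply]
  simp only [Matrix.smul_apply, Equiv.Perm.permMatrix, PEquiv.toMatrix_apply,
    Equiv.toPEquiv_apply, smul_eq_mul]
  simp only [Equiv.prodComm_apply, Prod.swap_prod_mk, Option.mem_def, Option.some.injEq]
  erw [trace_lmul]
  by_cases hbc : b = c
  · subst hbc
    rw [Matrix.single_mul_single_same, one_mul, trace_stdBasisMatrix']
    by_cases had : a = d
    · subst had
      simp
    · simp [had, Prod.ext_iff, fun h : d = a => had h.symm]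
  · rw [Matrix.single_mul_single_of_ne (h := hbc), Matrix.trace_zero, mul_zero]
    have h' : ¬((b, a) = (c, d)) := fun h => hbc (Prod.ext_iff.mp h).1
    simp [h']

end Aux

/-- For `n ≥ 1`, the discriminant of the matrix ring `Mₙ(ℤ)`, a ring of rank `n²`
(computed in any ℤ-basis, since the discriminant is basis-independent), equals
`(−1)^{n(n−1)/2} · n^{n²}`. -/
theorem disc_matrixRing (n : ℕ) (hn : 1 ≤ n)
    (b : Module.Basis (Fin (n ^ 2)) ℤ (Matrix (Fin n) (Fin n) ℤ)) :
    disc b = (-1) ^ (n * (n - 1) / 2) * (n : ℤ) ^ (n ^ 2) := by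
  classical
  set A := Matrix (Fin n) (Fin n) ℤ
  set e : Fin n × Fin n ≃ Fin (n ^ 2) := finProdFinEquiv.trans (finCongr (pow_two n).symm)
  rw [disc_eq_disc b ((matB n).reindex e)]
  unfold disc
  rw [gramMatrix_eq]
  have hsub : (LinearMap.BilinForm.toMatrix ((matB n).reindex e) (gramForm A)) =
      ((LinearMap.BilinForm.toMatrix (matB n) (gramForm A)).submatrix e.symm e.symm) := by
    ext i j
    rw [BilinForm.toMatrix_apply, Matrix.submatrix_apply,
      BilinForm.toMatrix_apply, Module.Basis.reindex_apply, Module.Basis.reindex_apply]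
  rw [hsub, Matrix.det_submatrix_equiv_self, gram_matB, Matrix.det_smul,
    Matrix.det_permutation]
  set σ : Equiv.Perm (Fin n × Fin n) := (Equiv.prodComm (Fin n) (Fin n))
  have hσ : σ ^ 2 = 1 := by
    rw [sq]
    exact Equiv.Perm.ext fun p => rfl
  rw [sign_of_sq_one hσ, support_card_prodComm]
  have hcard : Fintype.card (Fin n × Fin n) = n ^ 2 := by
    simp [Fintype.card_prod, pow_two]
  have hnn : n * n - n = n * (n - 1) := by
    cases n with
    | zero => simp
    | succ k => rw [Nat.succ_sub_one, Nat.mul_succ, Nat.add_sub_cancel]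
  rw [hcard, hnn, mul_comm]
  push_cast
  ring
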